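/- arXiv:cond-mat/9707255 — 2 statements merged into one kernel-verified Lean document; each statement's English description precedes it below -/
import Mathlib

section
/- With the setup of a normalized eigenvector Φ = ∑ φ_{(j,k)} Ψⱼ⊗Γₖ of H = H_S⊗1 + 1⊗H_B + H' with eigenvalue E, suppose additionally there is D > 0 such that V_{j,k;j',k'} = 0 whenever |(εⱼ + Bₖ) − (ε_{j'} + B_{k'})| > D. Then |φ_{(j,k)}| ≤ (1/n(j,k)!) (λ/D)^{n(j,k)}, where n(j,k) = ⌊|E − (εⱼ + Bₖ)|/D⌋ and λ = sup_{j,k} ∑_{j',k'} |V_{j,k;j',k'}|. -/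
theorem stmt_12 (n N : ℕ) (ε : Fin n → ℝ) (B : Fin N → ℝ)
    (V : Matrix (Fin n × Fin N) (Fin n × Fin N) ℂ)
    (H : Matrix (Fin n × Fin N) (Fin n × Fin N) ℂ)
    (hH : H = Matrix.diagonal (fun p => ((ε p.1 + B p.2 : ℝ) : ℂ)) + V)
    (lam : ℝ)
    (hlam : ∀ p, ∑ p', ‖V p p'‖ ≤ lam)
    (D : ℝ) (hD : 0 < D)
    (hband : ∀ p p', |(ε p.1 + B p.2) - (ε p'.1 + B p'.2)| > D → V p p' = 0)
    (φ : Fin n × Fin N → ℂ) (hnorm : ∑ p, ‖φ p‖ ^ 2 = 1)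
    (E : ℝ) (heig : H.mulVec φ = (E : ℂ) • φ) :
    ∀ p, ‖φ p‖ ≤
      (1 / (Nat.factorial ⌊|E - (ε p.1 + B p.2)| / D⌋₊ : ℝ)) *
        (lam / D) ^ (⌊|E - (ε p.1 + B p.2)| / D⌋₊) := by
  have hne : Nonempty (Fin n × Fin N) := by
    by_contra h
    rw [not_nonempty_iff] at h
    rw [Finset.univ_eq_empty, Finset.sum_empty] at hnorm
    norm_num at hnorm
  have hlam0 : 0 ≤ lam :=
    le_trans (Finset.sum_nonneg fun _ _ => norm_nonneg _)
      (hlam (Classical.arbitrary _))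
  set e : Fin n × Fin N → ℝ := fun p => ε p.1 + B p.2 with he
  have key : ∀ p, ((E : ℂ) - (e p : ℂ)) * φ p = ∑ p', V p p' * φ p' := by
    intro p
    have h1 := congrFun heig p
    rw [hH] at h1
    simp only [Matrix.mulVec, dotProduct, Matrix.add_apply, Pi.smul_apply,
      smul_eq_mul, add_mul, Finset.sum_add_distrib, Matrix.diagonal_apply, ite_mul,
      zero_mul, Finset.sum_ite_eq, Finset.mem_univ, if_true] at h1
    have : (e p : ℂ) * φ p + ∑ p', V p p' * φ p' = (E : ℂ) * φ p := h1
    linear_combination -this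
  have hbound1 : ∀ p, ‖φ p‖ ≤ 1 := by
    intro p
    have h2 : ‖φ p‖ ^ 2 ≤ 1 := by
      rw [← hnorm]
      exact Finset.single_le_sum (f := fun q => ‖φ q‖ ^ 2)
        (fun i _ => sq_nonneg _) (Finset.mem_univ p)
    nlinarith [norm_nonneg (φ p)]
  have main : ∀ k : ℕ, ∀ p, (k : ℝ) ≤ |E - e p| / D →
      ‖φ p‖ ≤ (1 / (k.factorial : ℝ)) * (lam / D) ^ k := by
    intro k
    induction k with
    | zero => intro p _; simpa using hbound1 p
    | succ k ih =>
      intro p hp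
      have hEe : ((k : ℝ) + 1) * D ≤ |E - e p| := by
        rw [le_div_iff₀ hD] at hp
        push_cast at hp ⊢
        linarith
      have hEpos : 0 < |E - e p| := lt_of_lt_of_le (by positivity) hEe
      have hRHS0 : 0 ≤ (1 / (k.factorial : ℝ)) * (lam / D) ^ k := by positivity
      have hsum : ‖∑ p', V p p' * φ p'‖ ≤
          lam * ((1 / (k.factorial : ℝ)) * (lam / D) ^ k) := by
        calc ‖∑ p', V p p' * φ p'‖
            ≤ ∑ p', ‖V p p'‖ * ‖φ p'‖ := by
              refine le_trans (norm_sum_le _ _) (le_of_eq ?_)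
              simp [map_mul]
          _ ≤ ∑ p', ‖V p p'‖ * ((1 / (k.factorial : ℝ)) * (lam / D) ^ k) := by
              refine Finset.sum_le_sum fun p' _ => ?_
              by_cases hV : V p p' = 0
              · simp [hV]
              · refine mul_le_mul_of_nonneg_left ?_ (norm_nonneg _)
                refine ih p' ?_
                have hb : |e p - e p'| ≤ D := by
                  by_contra hc
                  exact hV (hband p p' (lt_of_not_ge hc))
                have : (k : ℝ) * D ≤ |E - e p'| := by
                  have h3 : |E - e p| ≤ |E - e p'| + |e p - e p'| := by
                    have h4 := abs_add_le (E - e p') (e p' - e p)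
                    rw [show E - e p' + (e p' - e p) = E - e p by ring,
                      abs_sub_comm (e p') (e p)] at h4
                    exact h4
                  linarith
                rw [le_div_iff₀ hD]
                exact this
          _ = (∑ p', ‖V p p'‖) * ((1 / (k.factorial : ℝ)) * (lam / D) ^ k) := by
              rw [Finset.sum_mul]
          _ ≤ lam * ((1 / (k.factorial : ℝ)) * (lam / D) ^ k) :=
              mul_le_mul_of_nonneg_right (hlam p) hRHS0
      have habs : |E - e p| * ‖φ p‖ =
          ‖∑ p', V p p' * φ p'‖ := by
        rw [← key p, norm_mul]
        congr 1
        rw [show (E : ℂ) - (e p : ℂ) = ((E - e p : ℝ) : ℂ) by push_cast; ring,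
          Complex.norm_real, Real.norm_eq_abs]
      have h5 : |E - e p| * ‖φ p‖ ≤
          lam * ((1 / (k.factorial : ℝ)) * (lam / D) ^ k) := habs ▸ hsum
      have h6 : ((k : ℝ) + 1) * D * ‖φ p‖ ≤
          lam * ((1 / (k.factorial : ℝ)) * (lam / D) ^ k) :=
        le_trans (mul_le_mul_of_nonneg_right hEe (norm_nonneg _)) h5
      have hkD : 0 < ((k : ℝ) + 1) * D := by positivity
      rw [← le_div_iff₀' hkD] at h6
      refine le_trans h6 (le_of_eq ?_)
      rw [Nat.factorial_succ]
      push_cast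
      field_simp
      have hDl : D * (lam / D) = lam := by field_simp
      rw [pow_succ, mul_comm ((lam / D) ^ k), ← mul_assoc, hDl]
  intro p
  exact main _ p (Nat.floor_le (by positivity))
end

section
/- Let G₁, G₂, … be complex numbers with G₁ = 0 satisfying |G_{m+1}| ≤ (|G_m| + |G_m|²)(1 + aL^{−1/3} + bL^{−1/2}m^{1/2}) + cL^{−1}(1 + aL^{−1/3} + bL^{−1/2}m^{1/2}) + dL^{−1} + eL^{−3/2}m^{3/2}, for positive constants a,b,c,d,e and L ≥ 1. Then there are constants c₂ > 0 (sufficiently small) and C (depending only on a,b,c,d,e) such that |G_m| ≤ C·L^{−2/3} for all m with 1 ≤ m ≤ c₂L^{1/3}. -/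
set_option maxHeartbeats 1600000 in
lemma stmt_14_aux (a b c d e K D c₂ ε s u w iL x y X : ℝ)
    (ha : 0 < a) (hb : 0 < b) (hc : 0 < c) (hd : 0 < d) (he : 0 < e)
    (hKdef : K = a + b) (hDdef : D = c * (1 + K) + d + e)
    (hK0 : 0 < K) (hD0 : 0 < D)
    (hc₂0 : 0 < c₂) (hc₂1 : c₂ ≤ 1)
    (hc₂a : c₂ * (8 * D * (1 + K)) ≤ 1) (hc₂b : c₂ * (4 * K) ≤ 1)
    (hε0 : 0 ≤ ε) (hε1 : ε ≤ 1) (hiL : 0 < iL)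
    (hεw : ε * w = iL) (hww : w * w ≤ iL) (hw0 : 0 ≤ w)
    (hs : s ≤ ε) (hs0 : 0 ≤ s) (hu : u ≤ iL) (hu0 : 0 ≤ u)
    (hx0 : 0 ≤ x) (hxy : x ≤ y) (hy0 : 0 ≤ y) (hyz : y ≤ 2 * D * c₂ * w)
    (hX : X ≤ (x + x ^ 2) * (1 + a * ε + b * s)
        + c * iL * (1 + a * ε + b * s) + d * iL + e * u) :
    X ≤ y + 2 * D * iL := by
  have hKε : K * ε = a * ε + b * ε := by rw [hKdef]; ring
  have ht : 1 + a * ε + b * s ≤ 1 + K * ε := by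
    have := mul_le_mul_of_nonneg_left hs hb.le
    linarith [hKε]
  have ht0 : 0 ≤ 1 + a * ε + b * s := by
    have h1 := mul_nonneg ha.le hε0
    have h2 := mul_nonneg hb.le hs0
    linarith
  have hKε0 : 0 ≤ 1 + K * ε := by
    have := mul_nonneg hK0.le hε0
    linarith
  have hKε1 : 1 + K * ε ≤ 1 + K := by
    have := mul_le_mul_of_nonneg_left hε1 hK0.le
    linarith
  have hxy2 : (x + x ^ 2) * (1 + a * ε + b * s) ≤ (y + y ^ 2) * (1 + K * ε) := by
    have hsq : x ^ 2 ≤ y ^ 2 := by nlinarith [hx0, hxy]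
    have h1 : x + x ^ 2 ≤ y + y ^ 2 := by linarith
    have h2 : 0 ≤ y + y ^ 2 := by linarith [sq_nonneg y]
    exact mul_le_mul h1 ht ht0 h2
  have hyK : y * (K * ε) ≤ D / 2 * iL := by
    have h1 : y * (K * ε) ≤ (2 * D * c₂ * w) * (K * ε) :=
      mul_le_mul_of_nonneg_right hyz (mul_nonneg hK0.le hε0)
    have h2 : (2 * D * c₂ * w) * (K * ε) = 2 * D * c₂ * K * (ε * w) := by ring
    have h3 : (2 * c₂ * K) * (D * iL) ≤ (1 / 2) * (D * iL) :=
      mul_le_mul_of_nonneg_right (by linarith) (mul_pos hD0 hiL).le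
    rw [h2, hεw] at h1
    linarith [h1, h3]
  have hcoef : 4 * D ^ 2 * c₂ ^ 2 * (1 + K) ≤ D / 2 := by
    have e1 : c₂ * (c₂ * (8 * D * (1 + K))) ≤ c₂ * 1 :=
      mul_le_mul_of_nonneg_left hc₂a hc₂0.le
    have e2 : c₂ * (c₂ * (8 * D * (1 + K))) ≤ 1 := le_trans e1 (by linarith)
    have e3 := mul_le_mul_of_nonneg_left e2 (by positivity : (0:ℝ) ≤ D / 2)
    linarith [e3]
  have hy2 : y ^ 2 * (1 + K * ε) ≤ D / 2 * iL := by
    have h1 : y ^ 2 ≤ (2 * D * c₂) ^ 2 * (w * w) := by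
      linarith [pow_le_pow_left₀ hy0 hyz 2]
    have h4 : y ^ 2 * (1 + K * ε) ≤ (2 * D * c₂) ^ 2 * (w * w) * (1 + K * ε) :=
      mul_le_mul_of_nonneg_right h1 hKε0
    have h2 : (2 * D * c₂) ^ 2 * (w * w) * (1 + K * ε) ≤ (2 * D * c₂) ^ 2 * iL * (1 + K) := by
      have hA := mul_le_mul_of_nonneg_left hww (by positivity : (0:ℝ) ≤ (2 * D * c₂) ^ 2)
      exact mul_le_mul hA hKε1 hKε0 (by positivity)
    have h3 : (2 * D * c₂) ^ 2 * iL * (1 + K) ≤ D / 2 * iL := by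
      linarith [mul_le_mul_of_nonneg_right hcoef hiL.le]
    linarith
  have hmid : (y + y ^ 2) * (1 + K * ε) ≤ y + D * iL := by linarith [hyK, hy2]
  have htail : c * iL * (1 + a * ε + b * s) + d * iL + e * u ≤ D * iL := by
    have hsle1 : s ≤ 1 := le_trans hs hε1
    have e1 : a * ε ≤ a * 1 := mul_le_mul_of_nonneg_left hε1 ha.le
    have e2 : b * s ≤ b * 1 := mul_le_mul_of_nonneg_left hsle1 hb.le
    have h1 : 1 + a * ε + b * s ≤ 1 + K := by rw [hKdef]; linarith
    have h2 : (c * iL) * (1 + a * ε + b * s) ≤ (c * iL) * (1 + K) :=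
      mul_le_mul_of_nonneg_left h1 (mul_pos hc hiL).le
    have h3 : e * u ≤ e * iL := mul_le_mul_of_nonneg_left hu he.le
    rw [hDdef]
    linarith [h2, h3]
  linarith [hX, hxy2, hmid, htail]

set_option maxHeartbeats 1600000 in
theorem stmt_14 (a b c d e : ℝ) (ha : 0 < a) (hb : 0 < b) (hc : 0 < c)
    (hd : 0 < d) (he : 0 < e) :
    ∃ c₂ > (0:ℝ), ∃ C > (0:ℝ), ∀ (L : ℝ), 1 ≤ L → ∀ (G : ℕ → ℂ), G 1 = 0 →
      (∀ m : ℕ, 1 ≤ m →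
        ‖G (m + 1)‖ ≤
          (‖G m‖ + ‖G m‖ ^ 2) *
              (1 + a * L ^ (-(1:ℝ)/3) + b * L ^ (-(1:ℝ)/2) * (m : ℝ) ^ ((1:ℝ)/2))
            + c * L⁻¹ *
              (1 + a * L ^ (-(1:ℝ)/3) + b * L ^ (-(1:ℝ)/2) * (m : ℝ) ^ ((1:ℝ)/2))
            + d * L⁻¹ + e * L ^ (-(3:ℝ)/2) * (m : ℝ) ^ ((3:ℝ)/2)) →
      ∀ m : ℕ, 1 ≤ m → (m : ℝ) ≤ c₂ * L ^ ((1:ℝ)/3) →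
        ‖G m‖ ≤ C * L ^ (-(2:ℝ)/3) := by
  obtain ⟨K, hKdef⟩ : ∃ K : ℝ, K = a + b := ⟨_, rfl⟩
  have hK0 : 0 < K := by rw [hKdef]; positivity
  obtain ⟨D, hDdef⟩ : ∃ D : ℝ, D = c * (1 + K) + d + e := ⟨_, rfl⟩
  have hD0 : 0 < D := by rw [hDdef]; positivity
  obtain ⟨c₂, hc₂def⟩ : ∃ c₂ : ℝ, c₂ = min 1 (min (1/(8*D*(1+K))) (1/(4*K))) := ⟨_, rfl⟩
  have hc₂0 : 0 < c₂ := by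
    rw [hc₂def]
    refine lt_min one_pos (lt_min ?_ ?_) <;> positivity
  have hc₂1 : c₂ ≤ 1 := by rw [hc₂def]; exact min_le_left _ _
  have hc₂a : c₂ * (8*D*(1+K)) ≤ 1 := by
    have h : c₂ ≤ 1/(8*D*(1+K)) := by
      rw [hc₂def]
      exact le_trans (min_le_right 1 _) (min_le_left _ _)
    rw [le_div_iff₀ (by positivity)] at h
    exact h
  have hc₂b : c₂ * (4*K) ≤ 1 := by
    have h : c₂ ≤ 1/(4*K) := by
      rw [hc₂def]
      exact le_trans (min_le_right 1 _) (min_le_right _ _)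
    rw [le_div_iff₀ (by positivity)] at h
    exact h
  refine ⟨c₂, hc₂0, 2*D, by positivity, ?_⟩
  intro L hL G hG1 hrec
  have hL0 : (0:ℝ) < L := lt_of_lt_of_le one_pos hL
  have hε0 : (0:ℝ) ≤ L ^ (-(1:ℝ)/3) := (Real.rpow_pos_of_pos hL0 _).le
  have hε1 : L ^ (-(1:ℝ)/3) ≤ 1 := Real.rpow_le_one_of_one_le_of_nonpos hL (by norm_num)
  have hinv0 : (0:ℝ) < L⁻¹ := inv_pos.mpr hL0
  have hw0 : (0:ℝ) ≤ L ^ (-(2:ℝ)/3) := (Real.rpow_pos_of_pos hL0 _).le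
  have hεinv : L ^ (-(1:ℝ)/3) * L ^ (-(2:ℝ)/3) = L⁻¹ := by
    rw [← Real.rpow_add hL0, ← Real.rpow_neg_one L]; norm_num
  have h23 : L ^ ((1:ℝ)/3) * L⁻¹ = L ^ (-(2:ℝ)/3) := by
    rw [← Real.rpow_neg_one L, ← Real.rpow_add hL0]; norm_num
  have h43 : L ^ (-(2:ℝ)/3) * L ^ (-(2:ℝ)/3) ≤ L⁻¹ := by
    rw [← Real.rpow_add hL0, ← Real.rpow_neg_one L]
    exact Real.rpow_le_rpow_of_exponent_le hL (by norm_num)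
  have h13pos : (0:ℝ) < L ^ ((1:ℝ)/3) := Real.rpow_pos_of_pos hL0 _
  have key : ∀ m : ℕ, ((m+1 : ℕ):ℝ) ≤ c₂ * L ^ ((1:ℝ)/3) →
      ‖G (m+1)‖ ≤ (m:ℝ) * (2*D) * L⁻¹ := by
    intro m
    induction m with
    | zero => intro _; simp [hG1]
    | succ n ih =>
      intro hbound
      have hb' : ((n+1:ℕ):ℝ) ≤ c₂ * L ^ ((1:ℝ)/3) := by
        refine le_trans ?_ hbound; push_cast; linarith
      have hIH := ih hb'
      have hmle : ((n+1:ℕ):ℝ) ≤ L ^ ((1:ℝ)/3) := by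
        have h := mul_le_mul_of_nonneg_right hc₂1 h13pos.le
        calc ((n+1:ℕ):ℝ) ≤ c₂ * L ^ ((1:ℝ)/3) := hb'
        _ ≤ 1 * L ^ ((1:ℝ)/3) := h
        _ = L ^ ((1:ℝ)/3) := one_mul _
      have hm0 : (0:ℝ) ≤ ((n+1:ℕ):ℝ) := by positivity
      have hs : L ^ (-(1:ℝ)/2) * ((n+1:ℕ):ℝ) ^ ((1:ℝ)/2) ≤ L ^ (-(1:ℝ)/3) := by
        have h1 : ((n+1:ℕ):ℝ) ^ ((1:ℝ)/2) ≤ (L ^ ((1:ℝ)/3)) ^ ((1:ℝ)/2) :=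
          Real.rpow_le_rpow hm0 hmle (by norm_num)
        have h2 : (L ^ ((1:ℝ)/3)) ^ ((1:ℝ)/2) = L ^ ((1:ℝ)/6) := by
          rw [← Real.rpow_mul hL0.le]; norm_num
        calc L ^ (-(1:ℝ)/2) * ((n+1:ℕ):ℝ) ^ ((1:ℝ)/2)
            ≤ L ^ (-(1:ℝ)/2) * L ^ ((1:ℝ)/6) := by
              rw [← h2]
              exact mul_le_mul_of_nonneg_left h1 (Real.rpow_pos_of_pos hL0 _).le
          _ = L ^ (-(1:ℝ)/3) := by rw [← Real.rpow_add hL0]; norm_num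
      have hs0 : (0:ℝ) ≤ L ^ (-(1:ℝ)/2) * ((n+1:ℕ):ℝ) ^ ((1:ℝ)/2) := by positivity
      have hu : L ^ (-(3:ℝ)/2) * ((n+1:ℕ):ℝ) ^ ((3:ℝ)/2) ≤ L⁻¹ := by
        have h1 : ((n+1:ℕ):ℝ) ^ ((3:ℝ)/2) ≤ (L ^ ((1:ℝ)/3)) ^ ((3:ℝ)/2) :=
          Real.rpow_le_rpow hm0 hmle (by norm_num)
        have h2 : (L ^ ((1:ℝ)/3)) ^ ((3:ℝ)/2) = L ^ ((1:ℝ)/2) := by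
          rw [← Real.rpow_mul hL0.le]; norm_num
        calc L ^ (-(3:ℝ)/2) * ((n+1:ℕ):ℝ) ^ ((3:ℝ)/2)
            ≤ L ^ (-(3:ℝ)/2) * L ^ ((1:ℝ)/2) := by
              rw [← h2]
              exact mul_le_mul_of_nonneg_left h1 (Real.rpow_pos_of_pos hL0 _).le
          _ = L⁻¹ := by
              rw [← Real.rpow_add hL0, ← Real.rpow_neg_one L]; norm_num
      have hu0 : (0:ℝ) ≤ L ^ (-(3:ℝ)/2) * ((n+1:ℕ):ℝ) ^ ((3:ℝ)/2) := by positivity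
      have hrec' := hrec (n+1) (Nat.succ_le_succ (Nat.zero_le n))
      have hx0 : 0 ≤ ‖G (n+1)‖ := norm_nonneg _
      have hy0 : (0:ℝ) ≤ (n:ℝ) * (2*D) * L⁻¹ := by positivity
      have hyz : (n:ℝ) * (2*D) * L⁻¹ ≤ 2*D*c₂*(L ^ (-(2:ℝ)/3)) := by
        have hn : (n:ℝ) ≤ c₂ * L ^ ((1:ℝ)/3) := by
          refine le_trans ?_ hb'; push_cast; linarith
        calc (n:ℝ) * (2*D) * L⁻¹ ≤ (c₂ * L ^ ((1:ℝ)/3)) * (2*D) * L⁻¹ := by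
              apply mul_le_mul_of_nonneg_right _ hinv0.le
              exact mul_le_mul_of_nonneg_right hn (by positivity)
          _ = 2*D*c₂*(L ^ ((1:ℝ)/3) * L⁻¹) := by ring
          _ = 2*D*c₂*(L ^ (-(2:ℝ)/3)) := by rw [h23]
      have hX : ‖G (n+1+1)‖ ≤
          (‖G (n+1)‖ + ‖G (n+1)‖ ^ 2) *
            (1 + a * (L ^ (-(1:ℝ)/3)) + b * (L ^ (-(1:ℝ)/2) * ((n+1:ℕ):ℝ) ^ ((1:ℝ)/2)))
          + c * L⁻¹ *
            (1 + a * (L ^ (-(1:ℝ)/3)) + b * (L ^ (-(1:ℝ)/2) * ((n+1:ℕ):ℝ) ^ ((1:ℝ)/2)))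
          + d * L⁻¹ + e * (L ^ (-(3:ℝ)/2) * ((n+1:ℕ):ℝ) ^ ((3:ℝ)/2)) := by
        have h := hrec'
        calc ‖G (n+1+1)‖ ≤ _ := h
          _ = _ := by ring
      have hfinal := stmt_14_aux a b c d e K D c₂ (L ^ (-(1:ℝ)/3))
        (L ^ (-(1:ℝ)/2) * ((n+1:ℕ):ℝ) ^ ((1:ℝ)/2))
        (L ^ (-(3:ℝ)/2) * ((n+1:ℕ):ℝ) ^ ((3:ℝ)/2))
        (L ^ (-(2:ℝ)/3)) L⁻¹ (‖G (n+1)‖) ((n:ℝ) * (2*D) * L⁻¹)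
        (‖G (n+1+1)‖)
        ha hb hc hd he hKdef hDdef hK0 hD0 hc₂0 hc₂1 hc₂a hc₂b
        hε0 hε1 hinv0 hεinv h43 hw0 hs hs0 hu hu0 hx0 hIH hy0 hyz hX
      calc ‖G (n+1+1)‖ ≤ (n:ℝ) * (2*D) * L⁻¹ + 2*D*L⁻¹ := hfinal
        _ = ((n:ℝ)+1) * (2*D) * L⁻¹ := by ring
        _ = ((n+1:ℕ):ℝ) * (2*D) * L⁻¹ := by push_cast; ring
  intro m hm hmb
  obtain ⟨k, rfl⟩ : ∃ k, m = k + 1 := ⟨m-1, (Nat.succ_pred_eq_of_pos hm).symm⟩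
  have hkey := key k hmb
  have hk : (k:ℝ) ≤ c₂ * L ^ ((1:ℝ)/3) := by
    refine le_trans ?_ hmb; push_cast; linarith
  have hlast : c₂ * (2*D*L ^ (-(2:ℝ)/3)) ≤ 1 * (2*D*L ^ (-(2:ℝ)/3)) :=
    mul_le_mul_of_nonneg_right hc₂1 (by positivity)
  calc ‖G (k+1)‖ ≤ (k:ℝ) * (2*D) * L⁻¹ := hkey
    _ ≤ (c₂ * L ^ ((1:ℝ)/3)) * (2*D) * L⁻¹ := by
        apply mul_le_mul_of_nonneg_right _ hinv0.le
        exact mul_le_mul_of_nonneg_right hk (by positivity)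
    _ = 2*D*c₂*(L ^ ((1:ℝ)/3) * L⁻¹) := by ring
    _ = 2*D*c₂* L ^ (-(2:ℝ)/3) := by rw [h23]
    _ ≤ 2*D* L ^ (-(2:ℝ)/3) := by linarith [hlast]
end
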